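/- Under the y-pattern recursion y[k+1] = R(y[k]) for the 4-punctured sphere with initial condition y[1] = (y, y, −1/y, −1/y, −1, −1), define z_i[k] = −1/y[k]_i for i = 1,2 when F_k = R, and let z″ = 1/(1−z). Then the bottom gluing equation z₂[2]·z₁″[1]·z₂″[1] = 1 holds. -/

import Mathlib

/-- The flip `R` on cluster `y`-variables of the 4-punctured sphere (0-based indices). -/
noncomputable def R6 {K : Type*} [Field K] (y : Fin 6 → K) : Fin 6 → K :=
  ![y 4 * (1 + (y 0)⁻¹)⁻¹ * (1 + (y 1)⁻¹)⁻¹,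
    y 5 * (1 + (y 0)⁻¹)⁻¹ * (1 + (y 1)⁻¹)⁻¹,
    y 2 * (1 + y 0) * (1 + y 1),
    y 3 * (1 + y 0) * (1 + y 1),
    (y 1)⁻¹, (y 0)⁻¹]

/-- Bottom gluing equation `z₂[2]·z₁″[1]·z₂″[1] = 1` for the 4-punctured sphere
`y`-pattern with initial condition `y[1] = (y, y, −1/y, −1/y, −1, −1)` and
`y[2] = R(y[1])`, where `z_i[k] = −1/y[k]_i` and `z″ = 1/(1−z)`. -/
theorem bottom_gluing {K : Type*} [Field K] (yv : K) (hyv : yv ≠ 0)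
    (h1 : 1 + yv⁻¹ ≠ 0)
    (y1 y2 : Fin 6 → K)
    (hy1 : y1 = ![yv, yv, -yv⁻¹, -yv⁻¹, -1, -1])
    (hy2 : y2 = R6 y1)
    (z11 z21 z22 : K)
    (hz11 : z11 = -(y1 0)⁻¹) (hz21 : z21 = -(y1 1)⁻¹) (hz22 : z22 = -(y2 1)⁻¹)
    (hd1 : 1 - z11 ≠ 0) (hd2 : 1 - z21 ≠ 0) :
    z22 * (1 - z11)⁻¹ * (1 - z21)⁻¹ = 1 := by
  subst hy1 hy2 hz11 hz21 hz22
  simp only [R6] at *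
  norm_num [Matrix.cons_val_zero, Matrix.cons_val_one, Matrix.head_cons,
    show (![yv, yv, -yv⁻¹, -yv⁻¹, -1, -1] : Fin 6 → K) 5 = -1 from rfl] at *
  have h2 : yv + 1 ≠ 0 := by
    intro h
    apply h1
    field_simp
    linear_combination h
  field_simp
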